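/- For any real number E and any d×d Hermitian matrices v₁, v₂, the matrix J·(d/dE)[A(v₂,E)A(v₁,E)]·(A(v₁,E))^{-1}(A(v₂,E))^{-1}, where A(v,E) = [[E·I_d − v, −I_d],[I_d, 0]] and J = [[0,I_d],[−I_d,0]], equals −[[I_d, 0],[−(E·I−v₂), I_d]]·[[I_d, −(E·I−v₂)],[0, I_d]], which is negative definite. -/

import Mathlib

open Matrix
open scoped ComplexOrder

/-- The standard symplectic form matrix `J = [[0, I],[-I, 0]]` in `d×d` blocks. -/
def Jmat (d : ℕ) : Matrix (Fin d ⊕ Fin d) (Fin d ⊕ Fin d) ℂ :=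
  fromBlocks 0 1 (-1) 0

/-- The transfer matrix `A(v,E) = [[E·I − v, −I],[I, 0]]` of a Jacobi/Schrödinger
cocycle on the strip. -/
noncomputable def transferA (d : ℕ) (v : Matrix (Fin d) (Fin d) ℂ) (E : ℝ) :
    Matrix (Fin d ⊕ Fin d) (Fin d ⊕ Fin d) ℂ :=
  fromBlocks ((E : ℂ) • 1 - v) (-1) 1 0

/-- The block matrix `P = [[I,0],[0,0]]`, which is `(d/dE) A(v,E)`. -/
def Pblk (d : ℕ) : Matrix (Fin d ⊕ Fin d) (Fin d ⊕ Fin d) ℂ :=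
  fromBlocks 1 0 0 0

lemma posDef_self_mul_conjTranspose_of_inj {n : Type*} [Fintype n] [DecidableEq n]
    (A : Matrix n n ℂ) (hA : Function.Injective (Aᴴ).mulVec) :
    (A * Aᴴ).PosDef := by
  refine posDef_iff_dotProduct_mulVec.mpr ⟨isHermitian_mul_conjTranspose_self _, fun x hx => ?_⟩
  have : (A * Aᴴ) *ᵥ x = A *ᵥ (Aᴴ *ᵥ x) := by rw [mulVec_mulVec]
  rw [this, dotProduct_mulVec, ← conjTranspose_conjTranspose A, vecMul_conjTranspose,
    star_star, conjTranspose_conjTranspose]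
  refine Matrix.dotProduct_star_self_pos_iff.mpr fun h => hx (hA ?_)
  rw [h, mulVec_zero]

theorem schrodinger_cocycle_monotone (d : ℕ) (E : ℝ)
    (v₁ v₂ : Matrix (Fin d) (Fin d) ℂ)
    (h₁ : v₁.IsHermitian) (h₂ : v₂.IsHermitian) :
    Jmat d * (Pblk d * transferA d v₁ E + transferA d v₂ E * Pblk d) *
        (transferA d v₂ E * transferA d v₁ E)⁻¹
      = fromBlocks (-1) ((E : ℂ) • 1 - v₂) ((E : ℂ) • 1 - v₂)
          (-1 - ((E : ℂ) • 1 - v₂) * ((E : ℂ) • 1 - v₂)) ∧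
    (-(fromBlocks (-1) ((E : ℂ) • 1 - v₂) ((E : ℂ) • 1 - v₂)
          (-1 - ((E : ℂ) • 1 - v₂) * ((E : ℂ) • 1 - v₂)) :
        Matrix (Fin d ⊕ Fin d) (Fin d ⊕ Fin d) ℂ)).PosDef := by
  set S₁ : Matrix (Fin d) (Fin d) ℂ := (E : ℂ) • 1 - v₁ with hS₁
  set S₂ : Matrix (Fin d) (Fin d) ℂ := (E : ℂ) • 1 - v₂ with hS₂
  have hSH : S₂ᴴ = S₂ := by
    simp [hS₂, conjTranspose_sub, conjTranspose_smul, h₂.eq, Complex.star_def,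
      Complex.conj_ofReal]
  -- inverse of the product of transfer matrices
  have hinv : (transferA d v₂ E * transferA d v₁ E)⁻¹
      = fromBlocks 0 1 (-1) S₁ * fromBlocks 0 1 (-1) S₂ := by
    apply inv_eq_right_inv
    have t1 : transferA d v₁ E = fromBlocks S₁ (-1) 1 0 := by rw [hS₁]; rfl
    have t2 : transferA d v₂ E = fromBlocks S₂ (-1) 1 0 := by rw [hS₂]; rfl
    have e1 : transferA d v₁ E * fromBlocks 0 1 (-1) S₁ = 1 := by
      rw [t1]; simp [fromBlocks_multiply, ← fromBlocks_one]
    have e2 : transferA d v₂ E * fromBlocks 0 1 (-1) S₂ = 1 := by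
      rw [t2]; simp [fromBlocks_multiply, ← fromBlocks_one]
    calc transferA d v₂ E * transferA d v₁ E *
          (fromBlocks 0 1 (-1) S₁ * fromBlocks 0 1 (-1) S₂)
        = transferA d v₂ E * (transferA d v₁ E * fromBlocks 0 1 (-1) S₁) *
            fromBlocks 0 1 (-1) S₂ := by noncomm_ring
      _ = 1 := by rw [e1, mul_one, e2]
  constructor
  · have t1 : transferA d v₁ E = fromBlocks S₁ (-1) 1 0 := by rw [hS₁]; rfl
    have t2 : transferA d v₂ E = fromBlocks S₂ (-1) 1 0 := by rw [hS₂]; rfl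
    rw [hinv, t1, t2]
    simp only [Jmat, Pblk, fromBlocks_multiply, fromBlocks_add]
    simp only [hS₂]
    rw [fromBlocks_inj]
    refine ⟨?_, ?_, ?_, ?_⟩ <;> noncomm_ring <;> module
  · have key : (-(fromBlocks (-1) S₂ S₂ (-1 - S₂ * S₂) :
        Matrix (Fin d ⊕ Fin d) (Fin d ⊕ Fin d) ℂ))
        = (fromBlocks 1 0 (-S₂) 1) * (fromBlocks 1 0 (-S₂) 1)ᴴ := by
      rw [fromBlocks_conjTranspose, conjTranspose_neg, hSH]
      simp [fromBlocks_multiply, fromBlocks_neg]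
      try (congr 1 <;> noncomm_ring)
    rw [key]
    apply posDef_self_mul_conjTranspose_of_inj
    have hU : IsUnit ((fromBlocks 1 0 (-S₂) 1 :
        Matrix (Fin d ⊕ Fin d) (Fin d ⊕ Fin d) ℂ)ᴴ) := by
      simp [fromBlocks_conjTranspose, isUnit_iff_isUnit_det, det_fromBlocks_zero₂₁]
    exact mulVec_injective_iff_isUnit.mpr hU
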